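/- arXiv:1702.04625 — 3 statements merged into one kernel-verified Lean document; each statement's English description precedes it below -/
import Mathlib

section
/- Let J(δ) = ∫₀^δ λ(ε) dε where λ is non-increasing, λ ≥ 1 on (0,∞), and J(1) < ∞. Then the map (x,y) ↦ J(√(x/y))·√y is concave on [0,∞) × (0,∞). -/
open MeasureTheory Set


section
variable {lam : ℝ → ℝ}

/-- integrability on subintervals of [0,∞) -/
lemma ent_jint (hint : ∀ δ : ℝ, 0 < δ → IntervalIntegrable lam volume 0 δ)
    {s t : ℝ} (hs : 0 ≤ s) (hst : s ≤ t) : IntervalIntegrable lam volume s t := by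
  rcases eq_or_lt_of_le (hs.trans hst) with h | h
  · have : s = t := le_antisymm hst (h ▸ hs)
    simp [this]
  · exact (hint t h).mono_set (Set.uIcc_subset_uIcc
      (by rw [Set.uIcc_of_le (hs.trans hst)]; exact ⟨hs, hst⟩)
      (by rw [Set.uIcc_of_le (hs.trans hst)]; exact ⟨hs.trans hst, le_refl t⟩))

lemma ent_seg_nonneg (hone : ∀ ε : ℝ, 0 < ε → 1 ≤ lam ε)
    {s t : ℝ} (hs : 0 ≤ s) (hst : s ≤ t) : 0 ≤ ∫ ε in s..t, lam ε := by
  rw [intervalIntegral.integral_of_le hst]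
  apply setIntegral_nonneg measurableSet_Ioc
  intro ε hε
  exact le_trans zero_le_one (hone ε (lt_of_le_of_lt hs hε.1))
end

section
variable {lam : ℝ → ℝ}

lemma ent_jmono (hone : ∀ ε : ℝ, 0 < ε → 1 ≤ lam ε)
    (hint : ∀ δ : ℝ, 0 < δ → IntervalIntegrable lam volume 0 δ)
    {s t : ℝ} (hs : 0 ≤ s) (hst : s ≤ t) :
    ∫ ε in (0:ℝ)..s, lam ε ≤ ∫ ε in (0:ℝ)..t, lam ε := by
  have hadd := intervalIntegral.integral_add_adjacent_intervals
    (ent_jint hint le_rfl hs) (ent_jint hint hs hst)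
  have := ent_seg_nonneg hone hs hst
  linarith

lemma ent_seg_ge (hmono : AntitoneOn lam (Set.Ioi (0 : ℝ)))
    (hint : ∀ δ : ℝ, 0 < δ → IntervalIntegrable lam volume 0 δ)
    {s m : ℝ} (hs : 0 ≤ s) (hsm : s ≤ m) (hm : 0 < m) :
    (m - s) * lam m ≤ ∫ ε in s..m, lam ε := by
  rw [intervalIntegral.integral_of_le hsm]
  have hconst : (m - s) * lam m = ∫ _ in Set.Ioc s m, lam m := by
    rw [setIntegral_const, Real.volume_real_Ioc_of_le (by linarith),
      smul_eq_mul]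
  rw [hconst]
  refine setIntegral_mono_on (integrableOn_const measure_Ioc_lt_top.ne)
    (ent_jint hint hs hsm).1 measurableSet_Ioc ?_
  intro ε hε
  exact hmono (lt_of_le_of_lt hs hε.1) hm hε.2

lemma ent_seg_le (hmono : AntitoneOn lam (Set.Ioi (0 : ℝ)))
    (hint : ∀ δ : ℝ, 0 < δ → IntervalIntegrable lam volume 0 δ)
    {m t : ℝ} (hm : 0 < m) (hmt : m ≤ t) :
    ∫ ε in m..t, lam ε ≤ (t - m) * lam m := by
  rw [intervalIntegral.integral_of_le hmt]
  have hconst : (t - m) * lam m = ∫ _ in Set.Ioc m t, lam m := by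
    rw [setIntegral_const, Real.volume_real_Ioc_of_le (by linarith),
      smul_eq_mul]
  rw [hconst]
  refine setIntegral_mono_on (ent_jint hint hm.le hmt).1
    (integrableOn_const measure_Ioc_lt_top.ne) measurableSet_Ioc ?_
  intro ε hε
  exact hmono hm (lt_trans hm hε.1) hε.1.le
end

section
variable {lam : ℝ → ℝ}

lemma ent_key (hmono : AntitoneOn lam (Set.Ioi (0 : ℝ)))
    (hint : ∀ δ : ℝ, 0 < δ → IntervalIntegrable lam volume 0 δ)
    {x y a b : ℝ} (hx : 0 ≤ x) (hxy : x ≤ y) (ha : 0 ≤ a) (hb : 0 ≤ b)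
    (hab : a + b = 1) :
    a * (∫ ε in (0:ℝ)..x, lam ε) + b * (∫ ε in (0:ℝ)..y, lam ε)
      ≤ ∫ ε in (0:ℝ)..(a * x + b * y), lam ε := by
  set m := a * x + b * y with hm
  have hxm : x ≤ m := by nlinarith
  have hmy : m ≤ y := by nlinarith
  rcases eq_or_lt_of_le hb with hb0 | hb0
  · have ha1 : a = 1 := by linarith
    have : m = x := by rw [hm, ha1, ← hb0]; ring
    rw [this, ha1, ← hb0]; ring_nf; exact le_rfl
  rcases eq_or_lt_of_le ha with ha0 | ha0
  · have hb1 : b = 1 := by linarith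
    have : m = y := by rw [hm, hb1, ← ha0]; ring
    rw [this, hb1, ← ha0]; ring_nf; exact le_rfl
  rcases eq_or_lt_of_le hxy with hxy' | hxy'
  · have hmx : m = x := by rw [hm, ← hxy']; linear_combination x * hab
    have heq : a * (∫ ε in (0:ℝ)..x, lam ε) + b * (∫ ε in (0:ℝ)..x, lam ε)
        = ∫ ε in (0:ℝ)..x, lam ε := by
      linear_combination (∫ ε in (0:ℝ)..x, lam ε) * hab
    rw [hmx, ← hxy', heq]
  -- now 0 < a, 0 < b, x < y, so x < m < y and 0 < m
  have hxm' : x < m := by nlinarith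
  have hmy' : m < y := by nlinarith
  have hmpos : 0 < m := lt_of_le_of_lt hx hxm'
  set A := ∫ ε in x..m, lam ε with hA
  set B := ∫ ε in m..y, lam ε with hB
  have hAge : (m - x) * lam m ≤ A := ent_seg_ge hmono hint hx hxm'.le hmpos
  have hBle : B ≤ (y - m) * lam m := ent_seg_le hmono hint hmpos hmy'.le
  have hJm : (∫ ε in (0:ℝ)..x, lam ε) + A = ∫ ε in (0:ℝ)..m, lam ε :=
    intervalIntegral.integral_add_adjacent_intervals
      (ent_jint hint le_rfl hx) (ent_jint hint hx hxm'.le)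
  have hJy : (∫ ε in (0:ℝ)..m, lam ε) + B = ∫ ε in (0:ℝ)..y, lam ε :=
    intervalIntegral.integral_add_adjacent_intervals
      (ent_jint hint le_rfl hmpos.le) (ent_jint hint hmpos.le hmy'.le)
  have hmx : m - x = b * (y - x) := by rw [hm]; nlinarith
  have hym : y - m = a * (y - x) := by rw [hm]; nlinarith
  have h1 : b * B ≤ b * ((y - m) * lam m) := by nlinarith
  have h2 : a * ((m - x) * lam m) ≤ a * A := by nlinarith
  have h3 : b * ((y - m) * lam m) = a * ((m - x) * lam m) := by
    rw [hmx, hym]; ring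
  have e1 : a * (∫ ε in (0:ℝ)..x, lam ε) + b * (∫ ε in (0:ℝ)..y, lam ε)
      = (∫ ε in (0:ℝ)..x, lam ε) + b * A + b * B := by
    linear_combination (∫ ε in (0:ℝ)..x, lam ε) * hab - b * hJm - b * hJy
  have e2 : b * A + a * A = A := by linear_combination A * hab
  linarith

lemma ent_jconcave (hmono : AntitoneOn lam (Set.Ioi (0 : ℝ)))
    (hint : ∀ δ : ℝ, 0 < δ → IntervalIntegrable lam volume 0 δ) :
    ConcaveOn ℝ (Set.Ici (0:ℝ)) (fun t => ∫ ε in (0:ℝ)..t, lam ε) := by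
  refine ⟨convex_Ici 0, ?_⟩
  intro x hx y hy a b ha hb hab
  simp only [smul_eq_mul]
  rcases le_total x y with h | h
  · exact ent_key hmono hint hx h ha hb hab
  · have := ent_key hmono hint hy h hb ha (by linarith)
    calc a * (∫ ε in (0:ℝ)..x, lam ε) + b * (∫ ε in (0:ℝ)..y, lam ε)
        = b * (∫ ε in (0:ℝ)..y, lam ε) + a * (∫ ε in (0:ℝ)..x, lam ε) := by ring
      _ ≤ ∫ ε in (0:ℝ)..(b * y + a * x), lam ε := this
      _ = ∫ ε in (0:ℝ)..(a * x + b * y), lam ε := by rw [add_comm (b*y)]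

lemma ent_ratio (hmono : AntitoneOn lam (Set.Ioi (0 : ℝ)))
    (hint : ∀ δ : ℝ, 0 < δ → IntervalIntegrable lam volume 0 δ)
    {s t : ℝ} (hs : 0 < s) (hst : s ≤ t) :
    s * (∫ ε in (0:ℝ)..t, lam ε) ≤ t * (∫ ε in (0:ℝ)..s, lam ε) := by
  have ht : 0 < t := lt_of_lt_of_le hs hst
  have key := ent_key hmono hint (x := 0) (y := t) (a := 1 - s / t) (b := s / t)
    le_rfl ht.le (by rw [sub_nonneg]; exact div_le_one_of_le₀ hst ht.le)
    (by positivity) (by ring)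
  rw [intervalIntegral.integral_same, mul_zero, zero_add] at key
  have harg : (0:ℝ) + s / t * t = s := by field_simp; ring
  rw [harg] at key
  have := mul_le_mul_of_nonneg_left key ht.le
  calc s * (∫ ε in (0:ℝ)..t, lam ε)
      = t * (s / t * (∫ ε in (0:ℝ)..t, lam ε)) := by
        field_simp
    _ ≤ t * (∫ ε in (0:ℝ)..s, lam ε) := this
end

lemma ent_sqrt_comb {x1 x2 a b : ℝ} (hx1 : 0 ≤ x1) (hx2 : 0 ≤ x2)
    (ha : 0 ≤ a) (hb : 0 ≤ b) (hab : a + b = 1) :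
    a * Real.sqrt x1 + b * Real.sqrt x2 ≤ Real.sqrt (a * x1 + b * x2) := by
  have := Real.strictConcaveOn_sqrt.concaveOn.2 hx1 hx2 ha hb hab
  simpa [smul_eq_mul] using this


/-- Part 4 of the entropy-integral lemma: for the entropy integral
`J(δ) = ∫₀^δ lam(ε) dε` of a non-increasing function `lam ≥ 1` on `(0,∞)`
with `J(1) < ∞` (integrability up to every finite level), the map
`(x,y) ↦ J(√(x/y))·√y` is concave on `[0,∞) × (0,∞)`. -/
theorem entropy_integral_sqrt_concave
    (lam : ℝ → ℝ)
    (hmono : AntitoneOn lam (Set.Ioi (0 : ℝ)))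
    (hone : ∀ ε : ℝ, 0 < ε → 1 ≤ lam ε)
    (hint : ∀ δ : ℝ, 0 < δ → IntervalIntegrable lam volume 0 δ) :
    ConcaveOn ℝ (Set.Ici (0 : ℝ) ×ˢ Set.Ioi (0 : ℝ))
      (fun p : ℝ × ℝ =>
        (∫ ε in (0 : ℝ)..Real.sqrt (p.1 / p.2), lam ε) * Real.sqrt p.2) := by
  
  refine ⟨(convex_Ici 0).prod (convex_Ioi 0), ?_⟩
  rintro ⟨x₁, y₁⟩ hp ⟨x₂, y₂⟩ hq a b ha hb hab
  have hx₁ : (0:ℝ) ≤ x₁ := hp.1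
  have hy₁ : (0:ℝ) < y₁ := hp.2
  have hx₂ : (0:ℝ) ≤ x₂ := hq.1
  have hy₂ : (0:ℝ) < y₂ := hq.2
  set Jf : ℝ → ℝ := fun t => ∫ ε in (0:ℝ)..t, lam ε with hJf
  simp only [Prod.smul_mk, Prod.mk_add_mk, smul_eq_mul]
  rw [Real.sqrt_div hx₁, Real.sqrt_div hx₂,
    Real.sqrt_div (by positivity : (0:ℝ) ≤ a * x₁ + b * x₂)]
  set u₁ := Real.sqrt x₁ with hu₁d
  set u₂ := Real.sqrt x₂ with hu₂d
  set v₁ := Real.sqrt y₁ with hv₁d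
  set v₂ := Real.sqrt y₂ with hv₂d
  have hu₁ : 0 ≤ u₁ := Real.sqrt_nonneg _
  have hu₂ : 0 ≤ u₂ := Real.sqrt_nonneg _
  have hv₁ : 0 < v₁ := Real.sqrt_pos.2 hy₁
  have hv₂ : 0 < v₂ := Real.sqrt_pos.2 hy₂
  set U := a * u₁ + b * u₂ with hUd
  set V := a * v₁ + b * v₂ with hVd
  set U' := Real.sqrt (a * x₁ + b * x₂) with hU'd
  set V' := Real.sqrt (a * y₁ + b * y₂) with hV'd
  have hV : 0 < V := by
    rcases eq_or_lt_of_le ha with h | h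
    · have hb1 : b = 1 := by linarith
      rw [hVd, ← h, hb1]; nlinarith [hv₂]
    · rw [hVd]; nlinarith [mul_nonneg hb hv₂.le, mul_pos h hv₁]
  have hU : 0 ≤ U := by positivity
  have hUU' : U ≤ U' := ent_sqrt_comb hx₁ hx₂ ha hb hab
  have hVV' : V ≤ V' := ent_sqrt_comb hy₁.le hy₂.le ha hb hab
  have hV' : 0 < V' := lt_of_lt_of_le hV hVV'
  have hU'0 : 0 ≤ U' := Real.sqrt_nonneg _
  -- Step 1: perspective inequality
  have claim1 : a * (Jf (u₁ / v₁) * v₁) + b * (Jf (u₂ / v₂) * v₂)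
      ≤ Jf (U / V) * V := by
    have hw1 : 0 ≤ a * v₁ / V := by positivity
    have hw2 : 0 ≤ b * v₂ / V := by positivity
    have hw : a * v₁ / V + b * v₂ / V = 1 := by
      field_simp; exact hVd.symm
    have hc := (ent_jconcave hmono hint).2
      (Set.mem_Ici.2 (by positivity : (0:ℝ) ≤ u₁ / v₁))
      (Set.mem_Ici.2 (by positivity : (0:ℝ) ≤ u₂ / v₂)) hw1 hw2 hw
    simp only [smul_eq_mul] at hc
    have harg : a * v₁ / V * (u₁ / v₁) + b * v₂ / V * (u₂ / v₂) = U / V := by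
      rw [hUd]; field_simp
    rw [harg] at hc
    have hmul := mul_le_mul_of_nonneg_left hc hV.le
    calc a * (Jf (u₁ / v₁) * v₁) + b * (Jf (u₂ / v₂) * v₂)
        = V * (a * v₁ / V * Jf (u₁ / v₁) + b * v₂ / V * Jf (u₂ / v₂)) := by
          field_simp
      _ ≤ V * Jf (U / V) := hmul
      _ = Jf (U / V) * V := mul_comm _ _
  -- Step 2: monotonicity in the numerator
  have claim2 : Jf (U / V) ≤ Jf (U' / V) :=
    ent_jmono hone hint (by positivity) (by gcongr)
  -- Step 3: monotonicity in the denominator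
  have claim3 : Jf (U' / V) * V ≤ Jf (U' / V') * V' := by
    rcases eq_or_lt_of_le hU'0 with h | h
    · rw [← h]
      simp [hJf]
    · have h1 : 0 < U' / V' := by positivity
      have h2 : U' / V' ≤ U' / V := by gcongr
      have hr := ent_ratio hmono hint h1 h2
      have hpos : (0:ℝ) < V * V' / U' := by positivity
      have hmul := mul_le_mul_of_nonneg_left hr hpos.le
      calc Jf (U' / V) * V
          = (V * V' / U') * (U' / V' * Jf (U' / V)) := by field_simp
        _ ≤ (V * V' / U') * (U' / V * Jf (U' / V')) := hmul
        _ = Jf (U' / V') * V' := by field_simp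
  calc a * (Jf (u₁ / v₁) * v₁) + b * (Jf (u₂ / v₂) * v₂)
      ≤ Jf (U / V) * V := claim1
    _ ≤ Jf (U' / V) * V := mul_le_mul_of_nonneg_right claim2 hV.le
    _ ≤ Jf (U' / V') * V' := claim3
end

section
/- For all real a, b with |b| arbitrary: log(1 + e^{a+b}) − log(1 + e^a) − b·Λ(a) ≥ Λ(a)(1 − Λ(a))·(b²/2 − |b|³/6), where Λ(x) = eˣ/(1+eˣ). -/
open Real

noncomputable def lam (x : ℝ) : ℝ := exp x / (1 + exp x)
noncomputable def lam2 (x : ℝ) : ℝ := exp x / (1 + exp x)^2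

lemma oae (x : ℝ) : (0:ℝ) < 1 + exp x := by positivity

lemma hasDerivAt_loglam (x : ℝ) :
    HasDerivAt (fun x => log (1 + exp x)) (lam x) x := by
  have h2 : HasDerivAt (fun x : ℝ => 1 + exp x) (exp x) x :=
    (Real.hasDerivAt_exp x).const_add 1
  simpa [lam] using h2.log (ne_of_gt (oae x))

lemma hasDerivAt_lam (x : ℝ) : HasDerivAt lam (lam2 x) x := by
  have h1 : HasDerivAt (fun x : ℝ => exp x) (exp x) x := Real.hasDerivAt_exp x
  have h2 : HasDerivAt (fun x : ℝ => 1 + exp x) (exp x) x := h1.const_add 1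
  have h := h1.div h2 (ne_of_gt (oae x))
  refine h.congr_deriv ?_
  have := (oae x).ne'
  unfold lam2
  field_simp
  ring

lemma lam2_pos (x : ℝ) : 0 < lam2 x := by unfold lam2; positivity

/-- Key pointwise bound: `lam2 (x+t) ≥ lam2 x * exp (−|t|)`. -/
lemma lam2_lower (x t : ℝ) : lam2 x * exp (-|t|) ≤ lam2 (x + t) := by
  unfold lam2
  rcases le_total 0 t with ht | ht
  · rw [abs_of_nonneg ht]
    have hT : (1:ℝ) ≤ exp t := Real.one_le_exp ht
    have h1 : 1 + exp (x + t) ≤ exp t * (1 + exp x) := by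
      rw [exp_add]; nlinarith [exp_pos x]
    have h2 : (1 + exp (x+t))^2 ≤ (exp t * (1+exp x))^2 := by
      nlinarith [oae (x+t)]
    calc exp x / (1 + exp x)^2 * exp (-t)
        = exp (x+t) / (exp t * (1+exp x))^2 := by
          rw [exp_add, exp_neg]
          have h3 := (exp_pos t).ne'
          have h4 := (oae x).ne'
          field_simp
      _ ≤ exp (x+t) / (1 + exp (x+t))^2 :=
          div_le_div_of_nonneg_left (exp_pos _).le (by positivity) h2
  · rw [abs_of_nonpos ht, neg_neg]
    have h1 : exp (x+t) ≤ exp x := exp_le_exp.mpr (by linarith)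
    have h2 : (1 + exp (x+t))^2 ≤ (1 + exp x)^2 := by
      nlinarith [oae (x+t)]
    calc exp x / (1 + exp x)^2 * exp t
        = exp (x+t) / (1 + exp x)^2 := by rw [exp_add]; ring
      _ ≤ exp (x+t) / (1 + exp (x+t))^2 :=
          div_le_div_of_nonneg_left (exp_pos _).le (by positivity) h2

lemma hasDerivAt_lam_shift (a s : ℝ) :
    HasDerivAt (fun s : ℝ => lam (a + s)) (lam2 (a + s)) s := by
  have := (hasDerivAt_lam (a+s)).comp s ((hasDerivAt_id s).const_add a)
  exact this.congr_deriv (mul_one _)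

lemma hasDerivAt_loglam_shift (a s : ℝ) :
    HasDerivAt (fun s : ℝ => log (1 + exp (a + s))) (lam (a + s)) s := by
  have := (hasDerivAt_loglam (a+s)).comp s ((hasDerivAt_id s).const_add a)
  exact this.congr_deriv (mul_one _)

/-- Level 2, nonnegative side. -/
lemma lam_sub_lower (a : ℝ) {b : ℝ} (hb : 0 ≤ b) :
    lam2 a * (b - b^2/2) ≤ lam (a+b) - lam a := by
  set φ : ℝ → ℝ := fun s => lam (a+s) - lam2 a * (s - s^2/2) with hφ
  have hd : ∀ s : ℝ, HasDerivAt φ (lam2 (a+s) - lam2 a * (1 - s)) s := by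
    intro s
    have h1 := hasDerivAt_lam_shift a s
    have h2 : HasDerivAt (fun s : ℝ => s - s^2/2) (1 - s) s := by
      have ha := hasDerivAt_id s
      have hb2 := (hasDerivAt_pow 2 s).div_const 2
      have := ha.sub hb2
      refine this.congr_deriv ?_
      simp
    exact h1.sub (h2.const_mul (lam2 a))
  have mono : MonotoneOn φ (Set.Ici 0) := by
    apply monotoneOn_of_deriv_nonneg (convex_Ici 0)
    · exact fun s _ => (hd s).continuousAt.continuousWithinAt
    · intro s _; exact (hd s).differentiableAt.differentiableWithinAt
    · intro s hs
      rw [interior_Ici] at hs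
      rw [(hd s).deriv]
      have hs' : (0:ℝ) < s := hs
      have h1 := lam2_lower a s
      rw [abs_of_nonneg hs'.le] at h1
      have h2 : 1 - s ≤ exp (-s) := by
        have := Real.add_one_le_exp (-s); linarith
      have h3 := (lam2_pos a).le
      nlinarith
  have h0 : (0:ℝ) ∈ Set.Ici (0:ℝ) := Set.self_mem_Ici
  have hbm : b ∈ Set.Ici (0:ℝ) := hb
  have := mono h0 hbm hb
  simp only [hφ, add_zero] at this
  nlinarith [this]

/-- Level 2, nonpositive side. -/
lemma lam_sub_upper (a : ℝ) {b : ℝ} (hb : b ≤ 0) :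
    lam (a+b) - lam a ≤ lam2 a * (b + b^2/2) := by
  set ψ : ℝ → ℝ := fun s => lam2 a * (s + s^2/2) - lam (a+s) with hψ
  have hd : ∀ s : ℝ, HasDerivAt ψ (lam2 a * (1 + s) - lam2 (a+s)) s := by
    intro s
    have h1 := hasDerivAt_lam_shift a s
    have h2 : HasDerivAt (fun s : ℝ => s + s^2/2) (1 + s) s := by
      have ha := hasDerivAt_id s
      have hb2 := (hasDerivAt_pow 2 s).div_const 2
      have := ha.add hb2
      refine this.congr_deriv ?_
      simp
    exact (h2.const_mul (lam2 a)).sub h1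
  have anti : AntitoneOn ψ (Set.Iic 0) := by
    apply antitoneOn_of_deriv_nonpos (convex_Iic 0)
    · exact fun s _ => (hd s).continuousAt.continuousWithinAt
    · intro s _; exact (hd s).differentiableAt.differentiableWithinAt
    · intro s hs
      rw [interior_Iic] at hs
      rw [(hd s).deriv]
      have hs' : s < 0 := hs
      have h1 := lam2_lower a s
      rw [abs_of_nonpos hs'.le, neg_neg] at h1
      have h2 : 1 + s ≤ exp s := by
        have := Real.add_one_le_exp s; linarith
      have h3 := (lam2_pos a).le
      nlinarith
  have h0 : (0:ℝ) ∈ Set.Iic (0:ℝ) := Set.self_mem_Iic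
  have hbm : b ∈ Set.Iic (0:ℝ) := hb
  have := anti hbm h0 hb
  simp only [hψ, add_zero] at this
  nlinarith [this]

/-- Level 3, nonnegative side. -/
lemma main_nonneg (a : ℝ) {b : ℝ} (hb : 0 ≤ b) :
    lam2 a * (b^2/2 - b^3/6) ≤ log (1+exp (a+b)) - log (1+exp a) - b * lam a := by
  set h : ℝ → ℝ := fun s => log (1 + exp (a+s)) - s * lam a - lam2 a * (s^2/2 - s^3/6)
    with hh
  have hd : ∀ s : ℝ,
      HasDerivAt h (lam (a+s) - lam a - lam2 a * (s - s^2/2)) s := by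
    intro s
    have h1 := hasDerivAt_loglam_shift a s
    have h2 : HasDerivAt (fun s : ℝ => s * lam a) (lam a) s := by
      simpa using (hasDerivAt_id s).mul_const (lam a)
    have h3 : HasDerivAt (fun s : ℝ => s^2/2 - s^3/6) (s - s^2/2) s := by
      have ha := (hasDerivAt_pow 2 s).div_const 2
      have hb2 := (hasDerivAt_pow 3 s).div_const 6
      have := ha.sub hb2
      refine this.congr_deriv ?_
      simp
      ring
    exact (h1.sub h2).sub (h3.const_mul (lam2 a))
  have mono : MonotoneOn h (Set.Ici 0) := by
    apply monotoneOn_of_deriv_nonneg (convex_Ici 0)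
    · exact fun s _ => (hd s).continuousAt.continuousWithinAt
    · intro s _; exact (hd s).differentiableAt.differentiableWithinAt
    · intro s hs
      rw [interior_Ici] at hs
      rw [(hd s).deriv]
      have := lam_sub_lower a (le_of_lt (hs : (0:ℝ) < s))
      linarith
  have := mono Set.self_mem_Ici (hb : b ∈ Set.Ici 0) hb
  simp only [hh, add_zero] at this
  nlinarith [this]

/-- Level 3, nonpositive side. -/
lemma main_nonpos (a : ℝ) {b : ℝ} (hb : b ≤ 0) :
    lam2 a * (b^2/2 + b^3/6) ≤ log (1+exp (a+b)) - log (1+exp a) - b * lam a := by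
  set h : ℝ → ℝ := fun s => log (1 + exp (a+s)) - s * lam a - lam2 a * (s^2/2 + s^3/6)
    with hh
  have hd : ∀ s : ℝ,
      HasDerivAt h (lam (a+s) - lam a - lam2 a * (s + s^2/2)) s := by
    intro s
    have h1 := hasDerivAt_loglam_shift a s
    have h2 : HasDerivAt (fun s : ℝ => s * lam a) (lam a) s := by
      simpa using (hasDerivAt_id s).mul_const (lam a)
    have h3 : HasDerivAt (fun s : ℝ => s^2/2 + s^3/6) (s + s^2/2) s := by
      have ha := (hasDerivAt_pow 2 s).div_const 2
      have hb2 := (hasDerivAt_pow 3 s).div_const 6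
      have := ha.add hb2
      refine this.congr_deriv ?_
      simp
      ring
    exact (h1.sub h2).sub (h3.const_mul (lam2 a))
  have anti : AntitoneOn h (Set.Iic 0) := by
    apply antitoneOn_of_deriv_nonpos (convex_Iic 0)
    · exact fun s _ => (hd s).continuousAt.continuousWithinAt
    · intro s _; exact (hd s).differentiableAt.differentiableWithinAt
    · intro s hs
      rw [interior_Iic] at hs
      rw [(hd s).deriv]
      have := lam_sub_upper a (le_of_lt (hs : s < (0:ℝ)))
      linarith
  have := anti (hb : b ∈ Set.Iic 0) Set.self_mem_Iic hb
  simp only [hh, add_zero] at this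
  nlinarith [this]

lemma lam_mul_one_sub (a : ℝ) : lam a * (1 - lam a) = lam2 a := by
  unfold lam lam2
  have := (oae a).ne'
  field_simp
  ring

/-- Self-concordance-type minoration of the logistic loss: for all reals `a, b`,
`log(1 + e^{a+b}) − log(1 + e^a) − b·Λ(a) ≥ Λ(a)(1−Λ(a))·(b²/2 − |b|³/6)`,
where `Λ(x) = eˣ/(1+eˣ)`. -/
theorem logistic_self_concordance (a b : ℝ) :
    let Λ : ℝ → ℝ := fun x => Real.exp x / (1 + Real.exp x)
    Real.log (1 + Real.exp (a + b)) - Real.log (1 + Real.exp a) - b * Λ a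
      ≥ Λ a * (1 - Λ a) * (b^2 / 2 - |b|^3 / 6) := by
  intro Λ
  have hΛ : Λ a = lam a := rfl
  have hkey : Λ a * (1 - Λ a) = lam2 a := by rw [hΛ]; exact lam_mul_one_sub a
  rw [hΛ, lam_mul_one_sub a, ge_iff_le]
  rcases le_total 0 b with hb | hb
  · rw [abs_of_nonneg hb]
    exact main_nonneg a hb
  · rw [abs_of_nonpos hb]
    have := main_nonpos a hb
    calc lam2 a * (b^2/2 - (-b)^3/6) = lam2 a * (b^2/2 + b^3/6) := by ring
      _ ≤ _ := this
end

section
/- Let Q(θ̂) − Q(θ) ≤ (λ/n)(L‖Ψ(δ)_S‖₁ − l‖Ψ(δ)_{Sᶜ}‖₁) and Q(θ̂) − Q(θ) ≥ ∇Q(θ)'δ with |∇Q(θ)'δ| ≤ (λ/(nC))‖Ψδ‖₁ + r·Γ, where δ = θ̂ − θ, Γ ≥ 0, r ≥ 0, constants satisfy lC > 1, L ≥ l > 0. Then (λ(lC−1)/(nC))‖Ψ(δ)_{Sᶜ}‖₁ ≤ (λ(LC+1)/(nC))‖Ψ(δ)_S‖₁ + r·Γ; in particular if r·Γ = 0 then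 δ lies in the cone {δ : ‖Ψ(δ)_{Sᶜ}‖₁ ≤ ((LC+1)/(lC−1))‖Ψ(δ)_S‖₁}. -/
/-- Cone-membership deduction for penalized estimators: with
`NS = ‖Ψ(δ)_S‖₁`, `NSc = ‖Ψ(δ)_{Sᶜ}‖₁` (so `‖Ψδ‖₁ = NS + NSc`), if the
penalized minimizer satisfies
`Q(θ̂) − Q(θ) ≤ (λ/n)(L·NS − l·NSc)`, convexity gives
`Q(θ̂) − Q(θ) ≥ ∇Q(θ)'δ =: g`, and the score is dominated as
`|g| ≤ (λ/(nC))·(NS+NSc) + r·Γ`, with `lC > 1`, `L ≥ l > 0`, then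
`(λ(lC−1)/(nC))·NSc ≤ (λ(LC+1)/(nC))·NS + r·Γ`; in particular, if `r·Γ = 0`
then `δ` lies in the cone `NSc ≤ ((LC+1)/(lC−1))·NS`. -/
theorem lasso_cone_membership
    (Qd g lam n C l L r Γ NS NSc : ℝ)
    (hlam : 0 < lam) (hn : 0 < n) (hC : 0 < C)
    (hl : 0 < l) (hlL : l ≤ L) (hlC : 1 < l * C)
    (hr : 0 ≤ r) (hΓ : 0 ≤ Γ) (hNS : 0 ≤ NS) (hNSc : 0 ≤ NSc)
    (hupper : Qd ≤ (lam / n) * (L * NS - l * NSc))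
    (hlower : g ≤ Qd)
    (hgrad : |g| ≤ (lam / (n * C)) * (NS + NSc) + r * Γ) :
    (lam * (l * C - 1) / (n * C)) * NSc
      ≤ (lam * (L * C + 1) / (n * C)) * NS + r * Γ ∧
    (r * Γ = 0 → NSc ≤ ((L * C + 1) / (l * C - 1)) * NS) := by
  have hng : -((lam / (n * C)) * (NS + NSc) + r * Γ) ≤ g :=
    (abs_le.mp hgrad).1
  have hnC : (0:ℝ) < n * C := mul_pos hn hC
  have key : (lam * (l * C - 1) / (n * C)) * NSc
      ≤ (lam * (L * C + 1) / (n * C)) * NS + r * Γ := by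
    rw [div_mul_eq_mul_div, div_mul_eq_mul_div, div_add' _ _ _ (ne_of_gt hnC),
      div_le_div_iff₀ hnC hnC]
    have h1 : -((lam / (n * C)) * (NS + NSc) + r * Γ) ≤ (lam / n) * (L * NS - l * NSc) :=
      le_trans hng (le_trans hlower hupper)
    have h2 : -(lam / (n * C) * (NS + NSc)) * (n * C) - r * Γ * (n * C)
        ≤ (lam / n) * (L * NS - l * NSc) * (n * C) := by
      nlinarith [mul_le_mul_of_nonneg_right h1 (le_of_lt hnC)]
    have e1 : lam / (n * C) * (NS + NSc) * (n * C) = lam * (NS + NSc) := by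
      field_simp
    have e2 : (lam / n) * (L * NS - l * NSc) * (n * C) = lam * (L * NS - l * NSc) * C := by
      field_simp
    nlinarith [h2, e1, e2]
  refine ⟨key, fun hrΓ => ?_⟩
  have hpos : (0:ℝ) < lam * (l * C - 1) / (n * C) :=
    div_pos (mul_pos hlam (by linarith)) hnC
  rw [hrΓ, add_zero] at key
  rw [div_mul_eq_mul_div, le_div_iff₀ (by linarith : (0:ℝ) < l * C - 1)]
  rw [div_mul_eq_mul_div, div_mul_eq_mul_div, div_le_div_iff₀ hnC hnC] at key
  have hln : 0 < lam * (n * C) := mul_pos hlam hnC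
  nlinarith [key, hln]
end
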